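/- The Soft-HGR objective E[f(X)ᵀg(Y)] − (1/2)tr(Cov(f(X))Cov(g(Y))), over zero-mean f, g, is bounded above by (1/2)‖B̃‖_F² = (1/2)Σᵢ σᵢ(B̃)², and its supremum over all zero-mean f : 𝒳 → ℝᵏ, g : 𝒴 → ℝᵏ equals (1/2)Σ_{i=1}^{k} σᵢ(B̃)² when k ≤ rank(B̃). -/

import Mathlib

open Finset

section helpers
lemma expand2 {E ι₁ ι₂ : Type*} [Fintype E] [Fintype ι₁] [Fintype ι₂]
    (c : ι₁ → ℝ) (d : ι₂ → ℝ) (a : ι₁ → E → ℝ) (b : ι₂ → E → ℝ) :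
    ∑ x, (∑ l, c l * a l x) * (∑ m, d m * b m x)
      = ∑ l, ∑ m, (c l * d m) * (∑ x, a l x * b m x) := by
  simp_rw [Finset.sum_mul_sum]
  rw [Finset.sum_comm]
  refine Finset.sum_congr rfl fun l _ => ?_
  rw [Finset.sum_comm]
  refine Finset.sum_congr rfl fun m _ => ?_
  rw [Finset.mul_sum]
  exact Finset.sum_congr rfl fun x _ => by ring

lemma swap_lin {E ι : Type*} [Fintype E] [Fintype ι]
    (cc : E → ℝ) (r : ι → ℝ) (a : ι → E → ℝ) :
    ∑ x, cc x * (∑ m, r m * a m x) = ∑ m, r m * (∑ x, cc x * a m x) := by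
  simp_rw [Finset.mul_sum]
  rw [Finset.sum_comm]
  exact Finset.sum_congr rfl fun m _ => Finset.sum_congr rfl fun x _ => by ring

lemma rot {ι κ : Type*} [Fintype ι] [Fintype κ] [DecidableEq κ] (R : ι → κ → ℝ)
    (hR : ∀ m n, (∑ l, R l m * R l n) = if m = n then 1 else 0) (A B : κ → ℝ) :
    ∑ l, (∑ m, R l m * A m) * (∑ n, R l n * B n) = ∑ m, A m * B m := by
  simp_rw [Finset.sum_mul_sum]
  rw [Finset.sum_comm]
  refine Finset.sum_congr rfl fun m _ => ?_
  rw [Finset.sum_comm]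
  have key : ∀ n, ∑ l, (R l m * A m) * (R l n * B n)
      = (A m * B n) * (if m = n then 1 else 0) := fun n => by
    rw [← hR m n, Finset.mul_sum]
    exact Finset.sum_congr rfl fun l _ => by ring
  rw [Finset.sum_congr rfl fun n _ => key n]
  simp [Finset.sum_ite_eq, mul_ite]
end helpers


lemma bessel_sum {ι E : Type*} [Fintype E] [DecidableEq ι] (S : Finset ι)
    (w : ι → E → ℝ)
    (hw : ∀ i ∈ S, ∀ j ∈ S, (∑ t, w i t * w j t) = if i = j then 1 else 0)
    (c : E → ℝ) :
    ∑ i ∈ S, (∑ t, w i t * c t) ^ 2 ≤ ∑ t, (c t) ^ 2 := by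
  have key : (0:ℝ) ≤ ∑ t, (c t - ∑ i ∈ S, (∑ s, w i s * c s) * w i t) ^ 2 :=
    Finset.sum_nonneg fun t _ => sq_nonneg _
  have h1 : ∑ t, c t * (∑ i ∈ S, (∑ s, w i s * c s) * w i t)
      = ∑ i ∈ S, (∑ s, w i s * c s) ^ 2 := by
    simp_rw [Finset.mul_sum]
    rw [Finset.sum_comm]
    refine Finset.sum_congr rfl fun i _ => ?_
    have : ∑ x, c x * ((∑ s, w i s * c s) * w i x)
        = (∑ s, w i s * c s) * ∑ x, w i x * c x := by
      rw [Finset.mul_sum]; exact Finset.sum_congr rfl fun t _ => by ring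
    rw [this, sq]
  have h2 : ∑ t, (∑ i ∈ S, (∑ s, w i s * c s) * w i t) ^ 2
      = ∑ i ∈ S, (∑ s, w i s * c s) ^ 2 := by
    simp_rw [sq, Finset.sum_mul_sum]
    rw [Finset.sum_comm]
    refine Finset.sum_congr rfl fun i hi => ?_
    rw [Finset.sum_comm]
    have : ∀ j ∈ S, ∑ t, ((∑ s, w i s * c s) * w i t) * ((∑ s, w j s * c s) * w j t)
        = ((∑ s, w i s * c s) * (∑ s, w j s * c s)) * (if i = j then 1 else 0) := by
      intro j hj
      rw [← hw i hi j hj, Finset.mul_sum]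
      exact Finset.sum_congr rfl fun t _ => by ring
    rw [Finset.sum_congr rfl this]
    simp only [mul_ite, mul_one, mul_zero, Finset.sum_ite_eq, hi, if_pos]
    rw [Finset.sum_mul_sum]
  have expand : ∑ t, (c t - ∑ i ∈ S, (∑ s, w i s * c s) * w i t) ^ 2
      = (∑ t, (c t)^2) - ∑ i ∈ S, (∑ s, w i s * c s) ^ 2 := by
    simp only [sub_sq]
    rw [Finset.sum_add_distrib, Finset.sum_sub_distrib, h2]
    simp_rw [mul_assoc]
    rw [← Finset.mul_sum, h1]
    ring
  linarith [expand ▸ key]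


lemma card_filter_lt_fin {N k : ℕ} (h : k ≤ N) :
    (univ.filter (fun i : Fin N => (i : ℕ) < k)).card = k := by
  have : (univ.filter (fun i : Fin N => (i : ℕ) < k))
      = Finset.map (Fin.castLEEmb h) univ := by
    ext i
    simp only [mem_filter, mem_univ, true_and, Finset.mem_map, Fin.castLEEmb]
    simp only [Fin.castLE, Fin.ext_iff]
    constructor
    · intro hi
      exact ⟨⟨i, hi⟩, rfl⟩
    · rintro ⟨j, hj⟩
      exact hj ▸ j.isLt
  rw [this, Finset.card_map, Finset.card_univ, Fintype.card_fin]

lemma rearrange_bound {N k : ℕ} (σ : Fin N → ℝ) (hσ0 : ∀ i, 0 ≤ σ i)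
    (hσmono : Antitone σ) (c : Fin N → ℝ) (hc0 : ∀ i, 0 ≤ c i)
    (hc1 : ∀ i, c i ≤ 1) (hcsum : ∑ i, c i ≤ (k : ℝ)) :
    ∑ i, σ i ^ 2 * c i ≤ ∑ i ∈ univ.filter (fun i : Fin N => (i : ℕ) < k), σ i ^ 2 := by
  by_cases hkN : N ≤ k
  · have hfilt : univ.filter (fun i : Fin N => (i : ℕ) < k) = univ := by
      ext i; simp [lt_of_lt_of_le i.isLt hkN]
    rw [hfilt]
    exact Finset.sum_le_sum fun i _ => by nlinarith [sq_nonneg (σ i), hc1 i, hc0 i]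
  · push_neg at hkN
    set K : Fin N := ⟨k, hkN⟩ with hK
    set F := univ.filter (fun i : Fin N => (i : ℕ) < k) with hF
    have hsplit : ∑ i, σ i ^ 2 * c i
        = ∑ i ∈ F, σ i ^ 2 * c i + ∑ i ∈ Fᶜ, σ i ^ 2 * c i :=
      (Finset.sum_add_sum_compl F _).symm
    have hbound1 : ∑ i ∈ Fᶜ, σ i ^ 2 * c i ≤ σ K ^ 2 * ∑ i ∈ Fᶜ, c i := by
      rw [Finset.mul_sum]
      refine Finset.sum_le_sum fun i hi => ?_
      have hiK : K ≤ i := by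
        simp only [hF, Finset.mem_compl, mem_filter, mem_univ, true_and, not_lt] at hi
        exact hi
      have h2 : σ i ^ 2 ≤ σ K ^ 2 := by nlinarith [hσ0 i, hσ0 K, hσmono hiK]
      exact mul_le_mul_of_nonneg_right h2 (hc0 i)
    have hbound2 : σ K ^ 2 * ∑ i ∈ F, (1 - c i) ≤ ∑ i ∈ F, σ i ^ 2 * (1 - c i) := by
      rw [Finset.mul_sum]
      refine Finset.sum_le_sum fun i hi => ?_
      have hiK : i ≤ K := by
        simp only [hF, mem_filter, mem_univ, true_and] at hi
        exact le_of_lt hi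
      have h2 : σ K ^ 2 ≤ σ i ^ 2 := by nlinarith [hσ0 i, hσ0 K, hσmono hiK]
      have : (0:ℝ) ≤ 1 - c i := by linarith [hc1 i]
      exact mul_le_mul_of_nonneg_right h2 this
    have hcard : (F.card : ℝ) = k := by
      rw [hF, card_filter_lt_fin (le_of_lt hkN)]
    have hsum2 : ∑ i ∈ Fᶜ, c i ≤ ∑ i ∈ F, (1 - c i) := by
      rw [Finset.sum_sub_distrib, Finset.sum_const, nsmul_eq_mul, mul_one, hcard]
      have := Finset.sum_add_sum_compl F c
      linarith
    have hσK : (0:ℝ) ≤ σ K ^ 2 := sq_nonneg _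
    have : ∑ i ∈ Fᶜ, σ i ^ 2 * c i ≤ ∑ i ∈ F, σ i ^ 2 * (1 - c i) := by
      calc ∑ i ∈ Fᶜ, σ i ^ 2 * c i ≤ σ K ^ 2 * ∑ i ∈ Fᶜ, c i := hbound1
        _ ≤ σ K ^ 2 * ∑ i ∈ F, (1 - c i) := by nlinarith
        _ ≤ ∑ i ∈ F, σ i ^ 2 * (1 - c i) := hbound2
    have hexp : ∑ i ∈ F, σ i ^ 2 * (1 - c i) = ∑ i ∈ F, σ i ^ 2 - ∑ i ∈ F, σ i ^ 2 * c i := by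
      rw [← Finset.sum_sub_distrib]
      exact Finset.sum_congr rfl fun i _ => by ring
    rw [hsplit]
    rw [hexp] at this
    linarith

lemma key_ineq {X Y : Type*} [Fintype X] [Fintype Y] {k N : ℕ}
    (σ : Fin N → ℝ) (hσ0 : ∀ i, 0 ≤ σ i) (hσmono : Antitone σ)
    (u : Fin N → X → ℝ) (v : Fin N → Y → ℝ)
    (hON_u : ∀ i j, (∑ x, u i x * u j x) = if i = j then 1 else 0)
    (hON_v : ∀ i j, (∑ y, v i y * v j y) = if i = j then 1 else 0)
    (a : Fin k → X → ℝ) (b : Fin k → Y → ℝ) :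
    2 * (∑ l, ∑ i, σ i * ((∑ x, u i x * a l x) * (∑ y, v i y * b l y)))
      - (∑ l, ∑ m, (∑ x, a l x * a m x) * (∑ y, b l y * b m y))
    ≤ ∑ i ∈ univ.filter (fun i : Fin N => (i : ℕ) < k), σ i ^ 2 := by
  classical
  set G : Matrix (Fin k) (Fin k) ℝ := Matrix.of (fun l m => ∑ y, b l y * b m y) with hGdef
  have hGlm : ∀ l m, G l m = ∑ y, b l y * b m y := fun l m => rfl
  have hG : G.IsHermitian := by
    ext l m
    simp only [Matrix.conjTranspose_apply, star_trivial, hGlm]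
    exact Finset.sum_congr rfl fun y _ => mul_comm _ _
  set r := hG.eigenvectorBasis with hr
  set d := hG.eigenvalues with hd
  have eigc : ∀ j l, (∑ m, G l m * r j m) = d j * r j l := by
    intro j l
    have := congrFun (hG.mulVec_eigenvectorBasis j) l
    simpa [Matrix.mulVec, dotProduct] using this
  have rON : ∀ i j, (∑ m, r i m * r j m) = if i = j then 1 else 0 := by
    intro i j
    have h := orthonormal_iff_ite.mp r.orthonormal i j
    simpa [PiLp.inner_apply, RCLike.inner_apply, conj_trivial, mul_comm] using h
  have rDual : ∀ m n, (∑ j, r j m * r j n) = if m = n then 1 else 0 := by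
    intro m n
    have h := r.sum_inner_mul_inner (EuclideanSpace.single m (1:ℝ))
      (EuclideanSpace.single n (1:ℝ))
    simp only [EuclideanSpace.inner_single_left, EuclideanSpace.inner_single_right,
      conj_trivial, one_mul, mul_one, EuclideanSpace.single_apply] at h
    rw [h]
    by_cases hmn : m = n <;> simp [hmn, eq_comm]
  set q : Fin k → Y → ℝ := fun l y => ∑ m, r l m * b m y with hq
  have hqq : ∀ l m, (∑ y, q l y * q m y) = d m * (if l = m then 1 else 0) := by
    intro l m
    rw [show (∑ y, q l y * q m y)
        = ∑ n, ∑ n', ((r l n * r m n') * (∑ y, b n y * b n' y)) from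
      expand2 (fun n => r l n) (fun n => r m n) b b]
    have step : ∀ n, (∑ n', (r l n * r m n') * (∑ y, b n y * b n' y))
        = r l n * (d m * r m n) := by
      intro n
      have h1 : (∑ n', (r l n * r m n') * (∑ y, b n y * b n' y))
          = r l n * ∑ n', G n n' * r m n' := by
        rw [Finset.mul_sum]
        exact Finset.sum_congr rfl fun n' _ => by rw [hGlm]; ring
      rw [h1, eigc m n]
    rw [Finset.sum_congr rfl fun n _ => step n]
    have h2 : (∑ n, r l n * (d m * r m n)) = d m * ∑ n, r l n * r m n := by
      rw [Finset.mul_sum]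
      exact Finset.sum_congr rfl fun n _ => by ring
    rw [h2, rON l m]
  have hd0 : ∀ m, 0 ≤ d m := by
    intro m
    have h := hqq m m
    rw [if_pos rfl, mul_one] at h
    rw [← h]
    exact Finset.sum_nonneg fun y _ => mul_self_nonneg _
  set φ : Fin k → X → ℝ := fun l x => ∑ m, r l m * a m x with hφ
  have I1 : (∑ l, ∑ i, σ i * ((∑ x, u i x * a l x) * (∑ y, v i y * b l y)))
      = ∑ l, ∑ i, σ i * ((∑ x, u i x * φ l x) * (∑ y, v i y * q l y)) := by
    rw [Finset.sum_comm]
    conv_rhs => rw [Finset.sum_comm]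
    refine Finset.sum_congr rfl fun i _ => ?_
    rw [← Finset.mul_sum, ← Finset.mul_sum]
    congr 1
    have hrot := rot (fun l m => r l m) rDual
      (fun m => ∑ x, u i x * a m x) (fun m => ∑ y, v i y * b m y)
    rw [← hrot]
    refine Finset.sum_congr rfl fun l _ => ?_
    rw [show (∑ x, u i x * φ l x) = ∑ m, r l m * (∑ x, u i x * a m x) from
      swap_lin (u i) (fun m => r l m) a]
    rw [show (∑ y, v i y * q l y) = ∑ m, r l m * (∑ y, v i y * b m y) from
      swap_lin (v i) (fun m => r l m) b]
  have Gspec : ∀ l m, (∑ y, b l y * b m y) = ∑ j, d j * (r j l * r j m) := by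
    intro l m
    have h1 : ∀ j, d j * (r j l * r j m) = (∑ n, G l n * r j n) * r j m := by
      intro j; rw [eigc j l]; ring
    have h2 : (∑ j, (∑ n, G l n * r j n) * r j m)
        = ∑ n, G l n * (if n = m then 1 else 0) := by
      simp_rw [Finset.sum_mul]
      rw [Finset.sum_comm]
      refine Finset.sum_congr rfl fun n _ => ?_
      rw [← rDual n m, Finset.mul_sum]
      exact Finset.sum_congr rfl fun j _ => by ring
    rw [Finset.sum_congr rfl fun j _ => h1 j, h2]
    simp [Finset.sum_ite_eq, mul_ite, hGlm]
  have Pexpand : ∀ j, (∑ x, φ j x * φ j x)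
      = ∑ l, ∑ m, (r j l * r j m) * (∑ x, a l x * a m x) :=
    fun j => expand2 (fun l => r j l) (fun m => r j m) a a
  have tripleswap : ∀ (A : Fin k → Fin k → ℝ) (R : Fin k → Fin k → Fin k → ℝ),
      (∑ l, ∑ m, A l m * (∑ j, d j * R j l m))
        = ∑ j, d j * (∑ l, ∑ m, R j l m * A l m) := by
    intro A R
    simp_rw [Finset.mul_sum]
    conv_lhs => rw [Finset.sum_congr rfl fun l (_ : l ∈ univ) => Finset.sum_comm]
    conv_lhs => rw [Finset.sum_comm]
    exact Finset.sum_congr rfl fun j _ => Finset.sum_congr rfl fun l _ =>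
      Finset.sum_congr rfl fun m _ => by ring
  have I2 : (∑ l, ∑ m, (∑ x, a l x * a m x) * (∑ y, b l y * b m y))
      = ∑ j, d j * (∑ x, φ j x * φ j x) := by
    calc (∑ l, ∑ m, (∑ x, a l x * a m x) * (∑ y, b l y * b m y))
        = ∑ l, ∑ m, (∑ x, a l x * a m x) * (∑ j, d j * (r j l * r j m)) :=
          Finset.sum_congr rfl fun l _ => Finset.sum_congr rfl fun m _ => by rw [Gspec l m]
      _ = ∑ j, d j * (∑ l, ∑ m, (r j l * r j m) * (∑ x, a l x * a m x)) :=
          tripleswap _ _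
      _ = ∑ j, d j * (∑ x, φ j x * φ j x) :=
          Finset.sum_congr rfl fun j _ => by rw [Pexpand j]
  -- normalized right singular-type vectors
  set wv : Fin k → Y → ℝ := fun l y => if d l = 0 then 0 else q l y / Real.sqrt (d l) with hwv
  have hq_zero : ∀ l, d l = 0 → ∀ y, q l y = 0 := by
    intro l hl
    have h := hqq l l
    rw [if_pos rfl, mul_one, hl] at h
    intro y
    have hz := (Finset.sum_eq_zero_iff_of_nonneg
      (fun y _ => mul_self_nonneg (q l y))).mp h y (mem_univ y)
    exact mul_self_eq_zero.mp hz
  have hq_eq : ∀ l y, q l y = Real.sqrt (d l) * wv l y := by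
    intro l y
    by_cases hl : d l = 0
    · simp [hwv, hl, hq_zero l hl y]
    · have hdpos : 0 < d l := lt_of_le_of_ne (hd0 l) (Ne.symm hl)
      have hsqr : Real.sqrt (d l) ≠ 0 := ne_of_gt (Real.sqrt_pos.mpr hdpos)
      simp only [hwv, hl, if_false]
      field_simp
  set S : Finset (Fin k) := univ.filter (fun l => d l ≠ 0) with hS
  have hwS : ∀ l ∈ S, ∀ m ∈ S, (∑ y, wv l y * wv m y) = if l = m then 1 else 0 := by
    intro l hl m hm
    simp only [hS, mem_filter, mem_univ, true_and] at hl hm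
    have h1 : (∑ y, wv l y * wv m y)
        = (∑ y, q l y * q m y) / (Real.sqrt (d l) * Real.sqrt (d m)) := by
      rw [Finset.sum_div]
      refine Finset.sum_congr rfl fun y _ => ?_
      simp only [hwv, hl, hm, if_false]
      ring
    rw [h1, hqq l m]
    by_cases hlm : l = m
    · subst hlm
      rw [Real.mul_self_sqrt (hd0 l)]
      have hone : (if l = l then (1:ℝ) else 0) = 1 := if_pos rfl
      rw [hone, mul_one]
      exact div_self hl
    · simp only [if_neg hlm, mul_zero, zero_div]
  have hwnorm : ∀ l, (∑ y, wv l y * wv l y) ≤ 1 := by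
    intro l
    by_cases hl : d l = 0
    · simp [hwv, hl]
    · rw [hwS l (by simp [hS, hl]) l (by simp [hS, hl]), if_pos rfl]
  have perl : ∀ l, 2 * (∑ i, σ i * ((∑ x, u i x * φ l x) * (∑ y, v i y * q l y)))
      - d l * (∑ x, φ l x * φ l x)
      ≤ ∑ i, σ i ^ 2 * (∑ y, v i y * wv l y) ^ 2 := by
    intro l
    have hvq : ∀ i, (∑ y, v i y * q l y) = Real.sqrt (d l) * (∑ y, v i y * wv l y) := by
      intro i
      rw [Finset.mul_sum]
      exact Finset.sum_congr rfl fun y _ => by rw [hq_eq l y]; ring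
    set c : Fin N → ℝ := fun i => σ i * (∑ y, v i y * wv l y) with hc
    set s : ℝ := ∑ i, c i * (∑ x, u i x * φ l x) with hs
    have hLHS : (∑ i, σ i * ((∑ x, u i x * φ l x) * (∑ y, v i y * q l y)))
        = Real.sqrt (d l) * s := by
      rw [hs, Finset.mul_sum]
      exact Finset.sum_congr rfl fun i _ => by rw [hvq i, hc]; ring
    have hsz : s = ∑ x, (∑ i, c i * u i x) * φ l x := by
      rw [show (∑ x, (∑ i, c i * u i x) * φ l x)
          = ∑ x, φ l x * (∑ i, c i * u i x) from
        Finset.sum_congr rfl fun x _ => mul_comm _ _]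
      rw [swap_lin (φ l) c u, hs]
      refine Finset.sum_congr rfl fun i _ => ?_
      rw [show (∑ x, φ l x * u i x) = ∑ x, u i x * φ l x from
        Finset.sum_congr rfl fun x _ => mul_comm _ _]
    have hznorm : (∑ x, (∑ i, c i * u i x) * (∑ i, c i * u i x)) = ∑ i, c i * c i := by
      have := rot (fun x i => u i x) hON_u c c
      rw [← this]
      refine Finset.sum_congr rfl fun x _ => ?_
      congr 1 <;> exact Finset.sum_congr rfl fun i _ => mul_comm _ _
    have hs2 : s ^ 2 ≤ (∑ i, c i * c i) * (∑ x, φ l x * φ l x) := by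
      rw [hsz]
      have hcs := Finset.sum_mul_sq_le_sq_mul_sq univ (fun x => ∑ i, c i * u i x) (φ l)
      have e1 : (∑ x, (fun x => ∑ i, c i * u i x) x ^ 2)
          = ∑ x, (∑ i, c i * u i x) * (∑ i, c i * u i x) :=
        Finset.sum_congr rfl fun x _ => sq _
      have e2 : (∑ x, φ l x ^ 2) = ∑ x, φ l x * φ l x :=
        Finset.sum_congr rfl fun x _ => sq _
      calc (∑ x, (∑ i, c i * u i x) * φ l x) ^ 2
          ≤ (∑ x, (∑ i, c i * u i x) ^ 2) * (∑ x, φ l x ^ 2) := hcs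
        _ = (∑ i, c i * c i) * (∑ x, φ l x * φ l x) := by
            rw [e2]
            congr 1
            rw [← hznorm]
            exact Finset.sum_congr rfl fun x _ => sq _
    have hZeq : (∑ i, σ i ^ 2 * (∑ y, v i y * wv l y) ^ 2) = ∑ i, c i * c i :=
      Finset.sum_congr rfl fun i _ => by rw [hc]; ring
    rw [hLHS, hZeq]
    have hP0 : (0:ℝ) ≤ ∑ x, φ l x * φ l x :=
      Finset.sum_nonneg fun x _ => mul_self_nonneg _
    have hZ0 : (0:ℝ) ≤ ∑ i, c i * c i :=
      Finset.sum_nonneg fun i _ => mul_self_nonneg _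
    set e := Real.sqrt (d l) with hE
    have he0 : (0:ℝ) ≤ e := Real.sqrt_nonneg _
    have hee : d l = e ^ 2 := (Real.sq_sqrt (hd0 l)).symm
    rw [hee]
    set P := ∑ x, φ l x * φ l x
    set Z := ∑ i, c i * c i
    nlinarith [hs2, sq_nonneg (e^2*P - Z), sq_nonneg (e*s), mul_nonneg hP0 hZ0,
      sq_nonneg (e^2*P + Z - 2*(e*s)), sq_nonneg s, mul_nonneg (mul_nonneg he0 he0) hP0]
  have hswap2 : (∑ l, ∑ i, σ i ^ 2 * (∑ y, v i y * wv l y) ^ 2)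
      = ∑ i, σ i ^ 2 * (∑ l, (∑ y, v i y * wv l y) ^ 2) := by
    rw [Finset.sum_comm]
    exact Finset.sum_congr rfl fun i _ => (Finset.mul_sum _ _ _).symm
  have hci0 : ∀ i, (0:ℝ) ≤ ∑ l, (∑ y, v i y * wv l y) ^ 2 :=
    fun i => Finset.sum_nonneg fun l _ => sq_nonneg _
  have hci1 : ∀ i, (∑ l, (∑ y, v i y * wv l y) ^ 2) ≤ 1 := by
    intro i
    have hsplit : (∑ l ∈ S, (∑ y, v i y * wv l y) ^ 2)
        = ∑ l, (∑ y, v i y * wv l y) ^ 2 := by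
      refine Finset.sum_subset (Finset.subset_univ S) fun l _ hlS => ?_
      simp only [hS, mem_filter, mem_univ, true_and, not_not] at hlS
      have hwz : ∀ y, wv l y = 0 := fun y => by simp [hwv, hlS]
      simp [hwz]
    rw [← hsplit]
    have hb := bessel_sum S (fun l y => wv l y)
      (fun l hl m hm => hwS l hl m hm) (v i)
    have hv1 : (∑ y, v i y ^ 2) = 1 := by
      have := hON_v i i
      rw [if_pos rfl] at this
      rw [← this]
      exact Finset.sum_congr rfl fun y _ => sq _
    calc (∑ l ∈ S, (∑ y, v i y * wv l y) ^ 2)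
        = ∑ l ∈ S, (∑ y, wv l y * v i y) ^ 2 := by
          refine Finset.sum_congr rfl fun l _ => ?_
          rw [show (∑ y, v i y * wv l y) = ∑ y, wv l y * v i y from
            Finset.sum_congr rfl fun y _ => mul_comm _ _]
      _ ≤ ∑ y, v i y ^ 2 := hb
      _ = 1 := hv1
  have hcisum : (∑ i, (∑ l, (∑ y, v i y * wv l y) ^ 2)) ≤ (k : ℝ) := by
    rw [Finset.sum_comm]
    have h2 : ∀ l, (∑ i, (∑ y, v i y * wv l y) ^ 2) ≤ 1 := by
      intro l
      have hb := bessel_sum (univ : Finset (Fin N)) v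
        (fun i _ j _ => hON_v i j) (wv l)
      calc (∑ i, (∑ y, v i y * wv l y) ^ 2) ≤ ∑ y, wv l y ^ 2 := hb
        _ = ∑ y, wv l y * wv l y := Finset.sum_congr rfl fun y _ => sq _
        _ ≤ 1 := hwnorm l
    calc (∑ l, ∑ i, (∑ y, v i y * wv l y) ^ 2) ≤ ∑ _l : Fin k, (1:ℝ) :=
          Finset.sum_le_sum fun l _ => h2 l
      _ = (k : ℝ) := by simp
  have final := rearrange_bound σ hσ0 hσmono
    (fun i => ∑ l, (∑ y, v i y * wv l y) ^ 2) hci0 hci1 hcisum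
  rw [I1, I2]
  have hgoal : 2 * (∑ l, ∑ i, σ i * ((∑ x, u i x * φ l x) * (∑ y, v i y * q l y)))
      - (∑ j, d j * (∑ x, φ j x * φ j x))
      = ∑ l, (2 * (∑ i, σ i * ((∑ x, u i x * φ l x) * (∑ y, v i y * q l y)))
          - d l * (∑ x, φ l x * φ l x)) := by
    rw [Finset.sum_sub_distrib, ← Finset.mul_sum]
  rw [hgoal]
  calc (∑ l, (2 * (∑ i, σ i * ((∑ x, u i x * φ l x) * (∑ y, v i y * q l y)))
          - d l * (∑ x, φ l x * φ l x)))
      ≤ ∑ l, ∑ i, σ i ^ 2 * (∑ y, v i y * wv l y) ^ 2 :=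
        Finset.sum_le_sum fun l _ => perl l
    _ = ∑ i, σ i ^ 2 * (∑ l, (∑ y, v i y * wv l y) ^ 2) := hswap2
    _ ≤ ∑ i ∈ univ.filter (fun i : Fin N => (i : ℕ) < k), σ i ^ 2 := final
open Matrix

lemma rank_le_card_nonzero {X Y : Type*} [Fintype X] [Fintype Y] {N : ℕ}
    (σ : Fin N → ℝ) (u : Fin N → X → ℝ) (v : Fin N → Y → ℝ)
    (Btil : Matrix X Y ℝ)
    (hSVD : Btil = ∑ i, σ i • Matrix.vecMulVec (u i) (v i)) :
    Btil.rank ≤ (univ.filter (fun i => σ i ≠ 0)).card := by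
  classical
  set T : Finset (X → ℝ) := (univ.filter (fun i => σ i ≠ 0)).image u with hT
  have hrange : LinearMap.range Btil.mulVecLin ≤ Submodule.span ℝ (T : Set (X → ℝ)) := by
    rintro _ ⟨w, rfl⟩
    rw [Matrix.mulVecLin_apply]
    have hmv : Btil.mulVec w = ∑ i, (σ i * (∑ y, v i y * w y)) • u i := by
      ext x
      rw [hSVD]
      simp only [Matrix.mulVec, dotProduct, Matrix.sum_apply, Matrix.smul_apply,
        Matrix.vecMulVec_apply, smul_eq_mul, Finset.sum_apply, Pi.smul_apply]
      simp_rw [Finset.sum_mul]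
      rw [Finset.sum_comm]
      refine Finset.sum_congr rfl fun i _ => ?_
      rw [Finset.mul_sum, Finset.sum_mul]
      exact Finset.sum_congr rfl fun y _ => by ring
    rw [hmv]
    refine Submodule.sum_mem _ fun i _ => ?_
    by_cases hi : σ i = 0
    · simp [hi]
    · exact Submodule.smul_mem _ _ (Submodule.subset_span
        (by simp only [hT, coe_image, Set.mem_image, mem_coe, mem_filter, mem_univ, true_and]
            exact ⟨i, hi, rfl⟩))
  calc Btil.rank ≤ Module.finrank ℝ (Submodule.span ℝ (T : Set (X → ℝ))) :=
        Submodule.finrank_mono hrange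
    _ ≤ T.card := finrank_span_finset_le_card T
    _ ≤ (univ.filter (fun i => σ i ≠ 0)).card := Finset.card_image_le

lemma filter_lt_eq_map {N k : ℕ} (h : k ≤ N) :
    (univ.filter (fun i : Fin N => (i : ℕ) < k)) = Finset.map (Fin.castLEEmb h) univ := by
  ext i
  simp only [mem_filter, mem_univ, true_and, Finset.mem_map, Fin.castLEEmb]
  simp only [Fin.castLE, Fin.ext_iff]
  constructor
  · intro hi
    exact ⟨⟨i, hi⟩, rfl⟩
  · rintro ⟨j, hj⟩
    exact hj ▸ j.isLt

/-- Over zero-mean `f : 𝒳 → ℝᵏ`, `g : 𝒴 → ℝᵏ`, the Soft-HGR objective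
`E[f(X)ᵀg(Y)] - (1/2) tr(Cov(f) Cov(g))` (with `Cov(f) = ∑ x, P_X(x) f(x)f(x)ᵀ` since `f`
is zero-mean) is bounded above by `(1/2)‖B̃‖_F² = (1/2)∑ᵢ σᵢ(B̃)²`, and its supremum equals
`(1/2)∑_{i=1}^k σᵢ(B̃)²` whenever `k ≤ rank(B̃)`.  The singular values are given through an
orthonormal SVD of `B̃ = B - u₀v₀ᵀ`. -/
theorem soft_hgr_objective_supremum
    {X Y : Type*} [Fintype X] [Fintype Y] [DecidableEq X] [DecidableEq Y] {k N : ℕ}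
    (p : X → Y → ℝ) (hp : ∀ x y, 0 ≤ p x y) (hsum : ∑ x, ∑ y, p x y = 1)
    (hX : ∀ x, 0 < ∑ y, p x y) (hY : ∀ y, 0 < ∑ x, p x y)
    (B : Matrix X Y ℝ)
    (hB : ∀ x y, B x y = p x y / (Real.sqrt (∑ y', p x y') * Real.sqrt (∑ x', p x' y)))
    (u₀ : X → ℝ) (hu : ∀ x, u₀ x = Real.sqrt (∑ y, p x y))
    (v₀ : Y → ℝ) (hv : ∀ y, v₀ y = Real.sqrt (∑ x, p x y))
    (Btil : Matrix X Y ℝ) (hBtil : Btil = B - vecMulVec u₀ v₀)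
    (σ : Fin N → ℝ) (u : Fin N → X → ℝ) (v : Fin N → Y → ℝ)
    (hσ0 : ∀ i, 0 ≤ σ i) (hσmono : Antitone σ)
    (hON_u : ∀ i j, (∑ x, u i x * u j x) = if i = j then 1 else 0)
    (hON_v : ∀ i j, (∑ y, v i y * v j y) = if i = j then 1 else 0)
    (hSVD : Btil = ∑ i, σ i • vecMulVec (u i) (v i))
    (hk : k ≤ Btil.rank) :
    (∀ (f : X → Fin k → ℝ) (g : Y → Fin k → ℝ),
        (∀ i, ∑ x, (∑ y, p x y) * f x i = 0) →
        (∀ i, ∑ y, (∑ x, p x y) * g y i = 0) →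
        (∑ x, ∑ y, p x y * (∑ i, f x i * g y i))
            - (1 / 2 : ℝ) * ((Matrix.of fun i j => ∑ x, (∑ y, p x y) * (f x i * f x j)) *
                (Matrix.of fun i j => ∑ y, (∑ x, p x y) * (g y i * g y j))).trace
          ≤ (1 / 2 : ℝ) * ∑ i, σ i ^ 2) ∧
    sSup {r : ℝ | ∃ f : X → Fin k → ℝ, ∃ g : Y → Fin k → ℝ,
        (∀ i, ∑ x, (∑ y, p x y) * f x i = 0) ∧
        (∀ i, ∑ y, (∑ x, p x y) * g y i = 0) ∧
        r = (∑ x, ∑ y, p x y * (∑ i, f x i * g y i))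
            - (1 / 2 : ℝ) * ((Matrix.of fun i j => ∑ x, (∑ y, p x y) * (f x i * f x j)) *
                (Matrix.of fun i j => ∑ y, (∑ x, p x y) * (g y i * g y j))).trace}
      = (1 / 2 : ℝ) * ∑ i ∈ univ.filter (fun i : Fin N => (i : ℕ) < k), σ i ^ 2 := by
  classical
  have sqPX : ∀ x, Real.sqrt (∑ y, p x y) * Real.sqrt (∑ y, p x y) = ∑ y, p x y :=
    fun x => Real.mul_self_sqrt (le_of_lt (hX x))
  have sqPY : ∀ y, Real.sqrt (∑ x, p x y) * Real.sqrt (∑ x, p x y) = ∑ x, p x y :=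
    fun y => Real.mul_self_sqrt (le_of_lt (hY y))
  have sqPXpos : ∀ x, 0 < Real.sqrt (∑ y, p x y) := fun x => Real.sqrt_pos.mpr (hX x)
  have sqPYpos : ∀ y, 0 < Real.sqrt (∑ x, p x y) := fun y => Real.sqrt_pos.mpr (hY y)
  have hpB : ∀ x y, p x y
      = B x y * (Real.sqrt (∑ y', p x y') * Real.sqrt (∑ x', p x' y)) := by
    intro x y
    rw [hB x y, div_mul_cancel₀]
    exact ne_of_gt (mul_pos (sqPXpos x) (sqPYpos y))
  have hBtilsum : ∀ (aa : X → ℝ) (bb : Y → ℝ),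
      (∑ x, ∑ y, Btil x y * (aa x * bb y))
        = ∑ i, σ i * ((∑ x, u i x * aa x) * (∑ y, v i y * bb y)) := by
    intro aa bb
    rw [hSVD]
    simp only [Matrix.sum_apply, Matrix.smul_apply, Matrix.vecMulVec_apply, smul_eq_mul]
    simp_rw [Finset.sum_mul]
    conv_lhs => rw [Finset.sum_congr rfl fun x (_ : x ∈ univ) => Finset.sum_comm]
    conv_lhs => rw [Finset.sum_comm]
    refine Finset.sum_congr rfl fun i _ => ?_
    simp only [Finset.mul_sum]
    refine Finset.sum_congr rfl fun x _ => ?_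
    exact Finset.sum_congr rfl fun y _ => by ring
  have hu0B : ∀ y, (∑ x, u₀ x * B x y) = v₀ y := by
    intro y
    have h1 : ∀ x, u₀ x * B x y = p x y / Real.sqrt (∑ x', p x' y) := by
      intro x
      rw [hu, hB]
      have hx := ne_of_gt (sqPXpos x)
      have hy := ne_of_gt (sqPYpos y)
      field_simp
    rw [Finset.sum_congr rfl fun x _ => h1 x, ← Finset.sum_div, hv]
    exact Real.div_sqrt
  have hBv0 : ∀ x, (∑ y, B x y * v₀ y) = u₀ x := by
    intro x
    have h1 : ∀ y, B x y * v₀ y = p x y / Real.sqrt (∑ y', p x y') := by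
      intro y
      rw [hv, hB]
      have hx := ne_of_gt (sqPXpos x)
      have hy := ne_of_gt (sqPYpos y)
      field_simp
    rw [Finset.sum_congr rfl fun y _ => h1 y, ← Finset.sum_div, hu]
    exact Real.div_sqrt
  have hsumPX : (∑ x, u₀ x * u₀ x) = 1 := by
    have h1 : ∀ x, u₀ x * u₀ x = ∑ y, p x y := fun x => by rw [hu]; exact sqPX x
    rw [Finset.sum_congr rfl fun x _ => h1 x]
    exact hsum
  have hsumPY : (∑ y, v₀ y * v₀ y) = 1 := by
    have h1 : ∀ y, v₀ y * v₀ y = ∑ x, p x y := fun y => by rw [hv]; exact sqPY y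
    rw [Finset.sum_congr rfl fun y _ => h1 y]
    rw [Finset.sum_comm]
    exact hsum
  have hu0Btil : ∀ y, (∑ x, u₀ x * Btil x y) = 0 := by
    intro y
    rw [hBtil]
    simp only [Matrix.sub_apply, Matrix.vecMulVec_apply]
    simp_rw [mul_sub]
    rw [Finset.sum_sub_distrib, hu0B]
    have h2 : (∑ x, u₀ x * (u₀ x * v₀ y)) = (∑ x, u₀ x * u₀ x) * v₀ y := by
      rw [Finset.sum_mul]
      exact Finset.sum_congr rfl fun x _ => by ring
    rw [h2, hsumPX, one_mul, sub_self]
  have hBtilv0 : ∀ x, (∑ y, Btil x y * v₀ y) = 0 := by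
    intro x
    rw [hBtil]
    simp only [Matrix.sub_apply, Matrix.vecMulVec_apply]
    simp_rw [sub_mul]
    rw [Finset.sum_sub_distrib, hBv0]
    have h2 : (∑ y, u₀ x * v₀ y * v₀ y) = u₀ x * (∑ y, v₀ y * v₀ y) := by
      rw [Finset.mul_sum]
      exact Finset.sum_congr rfl fun y _ => by ring
    rw [h2, hsumPY, mul_one, sub_self]
  have hu0u : ∀ i, σ i ≠ 0 → (∑ x, u₀ x * u i x) = 0 := by
    intro i hi
    have h1 : (∑ x, ∑ y, Btil x y * (u₀ x * v i y)) = 0 := by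
      rw [Finset.sum_comm]
      refine Finset.sum_eq_zero fun y _ => ?_
      have h2 : (∑ x, Btil x y * (u₀ x * v i y)) = (∑ x, u₀ x * Btil x y) * v i y := by
        rw [Finset.sum_mul]
        exact Finset.sum_congr rfl fun x _ => by ring
      rw [h2, hu0Btil y, zero_mul]
    rw [hBtilsum u₀ (v i)] at h1
    have h2 : ∀ j, σ j * ((∑ x, u j x * u₀ x) * (∑ y, v j y * v i y))
        = if i = j then σ i * (∑ x, u i x * u₀ x) else 0 := by
      intro j
      rw [hON_v j i]
      by_cases hji : j = i
      · subst hji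
        rw [if_pos rfl, if_pos rfl, mul_one]
      · rw [if_neg hji, if_neg fun h => hji h.symm, mul_zero, mul_zero]
    rw [Finset.sum_congr rfl fun j _ => h2 j, Finset.sum_ite_eq univ i _] at h1
    simp only [mem_univ, if_true] at h1
    rcases mul_eq_zero.mp h1 with h | h
    · exact absurd h hi
    · rw [show (∑ x, u₀ x * u i x) = ∑ x, u i x * u₀ x from
        Finset.sum_congr rfl fun x _ => mul_comm _ _]
      exact h
  have hv0v : ∀ i, σ i ≠ 0 → (∑ y, v₀ y * v i y) = 0 := by
    intro i hi
    have h1 : (∑ x, ∑ y, Btil x y * (u i x * v₀ y)) = 0 := by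
      refine Finset.sum_eq_zero fun x _ => ?_
      have h2 : (∑ y, Btil x y * (u i x * v₀ y)) = (∑ y, Btil x y * v₀ y) * u i x := by
        rw [Finset.sum_mul]
        exact Finset.sum_congr rfl fun y _ => by ring
      rw [h2, hBtilv0 x, zero_mul]
    rw [hBtilsum (u i) v₀] at h1
    have h2 : ∀ j, σ j * ((∑ x, u j x * u i x) * (∑ y, v j y * v₀ y))
        = if i = j then σ i * (∑ y, v i y * v₀ y) else 0 := by
      intro j
      rw [hON_u j i]
      by_cases hji : j = i
      · subst hji
        rw [if_pos rfl, if_pos rfl, one_mul]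
      · rw [if_neg hji, if_neg fun h => hji h.symm, zero_mul, mul_zero]
    rw [Finset.sum_congr rfl fun j _ => h2 j, Finset.sum_ite_eq univ i _] at h1
    simp only [mem_univ, if_true] at h1
    rcases mul_eq_zero.mp h1 with h | h
    · exact absurd h hi
    · rw [show (∑ y, v₀ y * v i y) = ∑ y, v i y * v₀ y from
        Finset.sum_congr rfl fun y _ => mul_comm _ _]
      exact h
  -- conversion of the objective into the abstract form
  have hconv : ∀ (f : X → Fin k → ℝ) (g : Y → Fin k → ℝ),
      (∀ i, ∑ x, (∑ y, p x y) * f x i = 0) →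
      (∀ i, ∑ y, (∑ x, p x y) * g y i = 0) →
      (∑ x, ∑ y, p x y * (∑ i, f x i * g y i))
          - (1 / 2 : ℝ) * ((Matrix.of fun i j => ∑ x, (∑ y, p x y) * (f x i * f x j)) *
              (Matrix.of fun i j => ∑ y, (∑ x, p x y) * (g y i * g y j))).trace
        = (1/2) * (2 * (∑ l, ∑ i, σ i *
              ((∑ x, u i x * (Real.sqrt (∑ y', p x y') * f x l))
                * (∑ y, v i y * (Real.sqrt (∑ x', p x' y) * g y l))))
          - (∑ l, ∑ m,
              (∑ x, (Real.sqrt (∑ y', p x y') * f x l) * (Real.sqrt (∑ y', p x y') * f x m))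
              * (∑ y, (Real.sqrt (∑ x', p x' y) * g y l) * (Real.sqrt (∑ x', p x' y) * g y m)))) := by
    intro f g hf hg
    have hzm : ∀ l, (∑ x, u₀ x * (Real.sqrt (∑ y', p x y') * f x l)) = 0 := by
      intro l
      have h1 : ∀ x, u₀ x * (Real.sqrt (∑ y', p x y') * f x l) = (∑ y, p x y) * f x l := by
        intro x
        rw [hu, ← mul_assoc, sqPX x]
      rw [Finset.sum_congr rfl fun x _ => h1 x]
      exact hf l
    have hE : (∑ x, ∑ y, p x y * (∑ i, f x i * g y i))
        = ∑ l, ∑ i, σ i * ((∑ x, u i x * (Real.sqrt (∑ y', p x y') * f x l))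
            * (∑ y, v i y * (Real.sqrt (∑ x', p x' y) * g y l))) := by
      have s1 : (∑ x, ∑ y, p x y * (∑ i, f x i * g y i))
          = ∑ l, ∑ x, ∑ y, B x y * ((Real.sqrt (∑ y', p x y') * f x l)
              * (Real.sqrt (∑ x', p x' y) * g y l)) := by
        simp_rw [Finset.mul_sum]
        conv_lhs => rw [Finset.sum_congr rfl fun x (_ : x ∈ univ) => Finset.sum_comm]
        conv_lhs => rw [Finset.sum_comm]
        refine Finset.sum_congr rfl fun l _ => Finset.sum_congr rfl fun x _ =>
          Finset.sum_congr rfl fun y _ => ?_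
        rw [hpB x y]
        ring
      rw [s1]
      refine Finset.sum_congr rfl fun l _ => ?_
      have s2 : ∀ (x : X) (y : Y),
          B x y * ((Real.sqrt (∑ y', p x y') * f x l) * (Real.sqrt (∑ x', p x' y) * g y l))
          = Btil x y * ((Real.sqrt (∑ y', p x y') * f x l) * (Real.sqrt (∑ x', p x' y) * g y l))
            + (u₀ x * (Real.sqrt (∑ y', p x y') * f x l))
              * (v₀ y * (Real.sqrt (∑ x', p x' y) * g y l)) := by
        intro x y
        rw [hBtil]
        simp only [Matrix.sub_apply, Matrix.vecMulVec_apply]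
        ring
      rw [Finset.sum_congr rfl fun x (_ : x ∈ univ) =>
        Finset.sum_congr rfl fun y (_ : y ∈ univ) => s2 x y]
      simp_rw [Finset.sum_add_distrib]
      have s3 : (∑ x, ∑ y, (u₀ x * (Real.sqrt (∑ y', p x y') * f x l))
            * (v₀ y * (Real.sqrt (∑ x', p x' y) * g y l)))
          = (∑ x, u₀ x * (Real.sqrt (∑ y', p x y') * f x l))
            * (∑ y, v₀ y * (Real.sqrt (∑ x', p x' y) * g y l)) := by
        rw [Finset.sum_mul_sum]
      rw [s3, hzm l, zero_mul, add_zero]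
      exact hBtilsum _ _
    have hT : ((Matrix.of fun i j => ∑ x, (∑ y, p x y) * (f x i * f x j)) *
            (Matrix.of fun i j => ∑ y, (∑ x, p x y) * (g y i * g y j))).trace
        = ∑ l, ∑ m,
            (∑ x, (Real.sqrt (∑ y', p x y') * f x l) * (Real.sqrt (∑ y', p x y') * f x m))
            * (∑ y, (Real.sqrt (∑ x', p x' y) * g y l) * (Real.sqrt (∑ x', p x' y) * g y m)) := by
      rw [Matrix.trace]
      simp only [Matrix.diag_apply, Matrix.mul_apply, Matrix.of_apply]
      refine Finset.sum_congr rfl fun l _ => Finset.sum_congr rfl fun m _ => ?_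
      congr 1
      · refine Finset.sum_congr rfl fun x _ => ?_
        rw [show (Real.sqrt (∑ y', p x y') * f x l) * (Real.sqrt (∑ y', p x y') * f x m)
            = (Real.sqrt (∑ y', p x y') * Real.sqrt (∑ y', p x y')) * (f x l * f x m) from by
          ring]
        rw [sqPX x]
      · refine Finset.sum_congr rfl fun y _ => ?_
        rw [show (Real.sqrt (∑ x', p x' y) * g y l) * (Real.sqrt (∑ x', p x' y) * g y m)
            = (Real.sqrt (∑ x', p x' y) * Real.sqrt (∑ x', p x' y)) * (g y l * g y m) from by
          ring]
        rw [sqPY y]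
        ring
    rw [hE, hT]
    ring
  constructor
  · -- Part 1 : upper bound
    intro f g hf hg
    rw [hconv f g hf hg]
    have hki := key_ineq σ hσ0 hσmono u v hON_u hON_v
      (fun l x => Real.sqrt (∑ y', p x y') * f x l)
      (fun l y => Real.sqrt (∑ x', p x' y) * g y l)
    have hle : (∑ i ∈ univ.filter (fun i : Fin N => (i : ℕ) < k), σ i ^ 2)
        ≤ ∑ i, σ i ^ 2 :=
      Finset.sum_le_sum_of_subset_of_nonneg (Finset.filter_subset _ _)
        (fun i _ _ => sq_nonneg _)
    linarith [hki, hle]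
  · -- Part 2 : the supremum
    have hrank := rank_le_card_nonzero σ u v Btil hSVD
    have hkcard : k ≤ (univ.filter (fun i => σ i ≠ 0)).card := le_trans hk hrank
    have hkN : k ≤ N := by
      refine le_trans hkcard (le_trans (Finset.card_filter_le _ _) ?_)
      rw [Finset.card_univ, Fintype.card_fin]
    have hσpos : ∀ l : Fin k, σ (Fin.castLE hkN l) ≠ 0 := by
      intro l h0
      have hsub : (univ.filter (fun i => σ i ≠ 0))
          ⊆ univ.filter (fun i : Fin N => (i : ℕ) < (l : ℕ)) := by
        intro j hj
        simp only [mem_filter, mem_univ, true_and] at hj ⊢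
        by_contra hge
        push_neg at hge
        have hle2 : Fin.castLE hkN l ≤ j := by
          rw [Fin.le_def]
          exact hge
        have : σ j ≤ σ (Fin.castLE hkN l) := hσmono hle2
        exact hj (le_antisymm (h0 ▸ this) (hσ0 j))
      have hcard2 := Finset.card_le_card hsub
      have hlN : (l : ℕ) ≤ N := le_of_lt (lt_of_lt_of_le l.isLt hkN)
      rw [card_filter_lt_fin hlN] at hcard2
      have : k ≤ (l : ℕ) := le_trans hkcard hcard2
      exact absurd this (not_le.mpr l.isLt)
    set c : Fin k → Fin N := fun l => Fin.castLE hkN l with hc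
    set f0 : X → Fin k → ℝ :=
      fun x l => Real.sqrt (σ (c l)) * u (c l) x / Real.sqrt (∑ y, p x y) with hf0
    set g0 : Y → Fin k → ℝ :=
      fun y l => Real.sqrt (σ (c l)) * v (c l) y / Real.sqrt (∑ x, p x y) with hg0
    have ha0 : ∀ (l : Fin k) (x : X),
        Real.sqrt (∑ y', p x y') * f0 x l = Real.sqrt (σ (c l)) * u (c l) x := by
      intro l x
      simp only [hf0]
      rw [mul_div_assoc']
      exact mul_div_cancel_left₀ _ (ne_of_gt (sqPXpos x))
    have hb0 : ∀ (l : Fin k) (y : Y),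
        Real.sqrt (∑ x', p x' y) * g0 y l = Real.sqrt (σ (c l)) * v (c l) y := by
      intro l y
      simp only [hg0]
      rw [mul_div_assoc']
      exact mul_div_cancel_left₀ _ (ne_of_gt (sqPYpos y))
    have hzf : ∀ l, (∑ x, (∑ y, p x y) * f0 x l) = 0 := by
      intro l
      have h1 : ∀ x, (∑ y, p x y) * f0 x l
          = Real.sqrt (σ (c l)) * (u₀ x * u (c l) x) := by
        intro x
        simp only [hf0]
        rw [hu]
        rw [show (∑ y, p x y) * (Real.sqrt (σ (c l)) * u (c l) x / Real.sqrt (∑ y, p x y))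
            = (Real.sqrt (σ (c l)) * u (c l) x) * ((∑ y, p x y) / Real.sqrt (∑ y, p x y))
          from by ring]
        rw [Real.div_sqrt]
        ring
      rw [Finset.sum_congr rfl fun x _ => h1 x, ← Finset.mul_sum,
        hu0u (c l) (hσpos l), mul_zero]
    have hzg : ∀ l, (∑ y, (∑ x, p x y) * g0 y l) = 0 := by
      intro l
      have h1 : ∀ y, (∑ x, p x y) * g0 y l
          = Real.sqrt (σ (c l)) * (v₀ y * v (c l) y) := by
        intro y
        simp only [hg0]
        rw [hv]
        rw [show (∑ x, p x y) * (Real.sqrt (σ (c l)) * v (c l) y / Real.sqrt (∑ x, p x y))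
            = (Real.sqrt (σ (c l)) * v (c l) y) * ((∑ x, p x y) / Real.sqrt (∑ x, p x y))
          from by ring]
        rw [Real.div_sqrt]
        ring
      rw [Finset.sum_congr rfl fun y _ => h1 y, ← Finset.mul_sum,
        hv0v (c l) (hσpos l), mul_zero]
    -- inner products of the witness
    have hua : ∀ (i : Fin N) (l : Fin k),
        (∑ x, u i x * (Real.sqrt (∑ y', p x y') * f0 x l))
          = Real.sqrt (σ (c l)) * (if i = c l then 1 else 0) := by
      intro i l
      have h1 : ∀ x, u i x * (Real.sqrt (∑ y', p x y') * f0 x l)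
          = Real.sqrt (σ (c l)) * (u i x * u (c l) x) := by
        intro x
        rw [ha0 l x]
        ring
      rw [Finset.sum_congr rfl fun x _ => h1 x, ← Finset.mul_sum, hON_u i (c l)]
    have hvb : ∀ (i : Fin N) (l : Fin k),
        (∑ y, v i y * (Real.sqrt (∑ x', p x' y) * g0 y l))
          = Real.sqrt (σ (c l)) * (if i = c l then 1 else 0) := by
      intro i l
      have h1 : ∀ y, v i y * (Real.sqrt (∑ x', p x' y) * g0 y l)
          = Real.sqrt (σ (c l)) * (v i y * v (c l) y) := by
        intro y
        rw [hb0 l y]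
        ring
      rw [Finset.sum_congr rfl fun y _ => h1 y, ← Finset.mul_sum, hON_v i (c l)]
    have hsq : ∀ l : Fin k, Real.sqrt (σ (c l)) * Real.sqrt (σ (c l)) = σ (c l) :=
      fun l => Real.mul_self_sqrt (hσ0 (c l))
    have hEval : (∑ l, ∑ i, σ i *
          ((∑ x, u i x * (Real.sqrt (∑ y', p x y') * f0 x l))
            * (∑ y, v i y * (Real.sqrt (∑ x', p x' y) * g0 y l))))
        = ∑ l, σ (c l) ^ 2 := by
      refine Finset.sum_congr rfl fun l _ => ?_
      have h1 : ∀ i, σ i * ((∑ x, u i x * (Real.sqrt (∑ y', p x y') * f0 x l))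
            * (∑ y, v i y * (Real.sqrt (∑ x', p x' y) * g0 y l)))
          = if c l = i then σ (c l) ^ 2 else 0 := by
        intro i
        rw [hua i l, hvb i l]
        by_cases hil : i = c l
        · subst hil
          rw [if_pos rfl, if_pos rfl]
          linear_combination σ (c l) * hsq l
        · rw [if_neg hil, if_neg fun h => hil h.symm, mul_zero, mul_zero, mul_zero]
      rw [Finset.sum_congr rfl fun i _ => h1 i, Finset.sum_ite_eq univ (c l) _]
      simp only [mem_univ, if_true]
    have haa : ∀ l m : Fin k,
        (∑ x, (Real.sqrt (∑ y', p x y') * f0 x l) * (Real.sqrt (∑ y', p x y') * f0 x m))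
          = Real.sqrt (σ (c l)) * Real.sqrt (σ (c m)) * (if l = m then 1 else 0) := by
      intro l m
      have h1 : ∀ x, (Real.sqrt (∑ y', p x y') * f0 x l) * (Real.sqrt (∑ y', p x y') * f0 x m)
          = Real.sqrt (σ (c l)) * Real.sqrt (σ (c m)) * (u (c l) x * u (c m) x) := by
        intro x
        rw [ha0 l x, ha0 m x]
        ring
      rw [Finset.sum_congr rfl fun x _ => h1 x, ← Finset.mul_sum, hON_u (c l) (c m)]
      congr 1
      by_cases hlm : l = m
      · subst hlm; rw [if_pos rfl, if_pos rfl]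
      · rw [if_neg hlm, if_neg fun h => hlm (Fin.castLE_injective hkN h)]
    have hbb : ∀ l m : Fin k,
        (∑ y, (Real.sqrt (∑ x', p x' y) * g0 y l) * (Real.sqrt (∑ x', p x' y) * g0 y m))
          = Real.sqrt (σ (c l)) * Real.sqrt (σ (c m)) * (if l = m then 1 else 0) := by
      intro l m
      have h1 : ∀ y, (Real.sqrt (∑ x', p x' y) * g0 y l) * (Real.sqrt (∑ x', p x' y) * g0 y m)
          = Real.sqrt (σ (c l)) * Real.sqrt (σ (c m)) * (v (c l) y * v (c m) y) := by
        intro y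
        rw [hb0 l y, hb0 m y]
        ring
      rw [Finset.sum_congr rfl fun y _ => h1 y, ← Finset.mul_sum, hON_v (c l) (c m)]
      congr 1
      by_cases hlm : l = m
      · subst hlm; rw [if_pos rfl, if_pos rfl]
      · rw [if_neg hlm, if_neg fun h => hlm (Fin.castLE_injective hkN h)]
    have hTval : (∑ l, ∑ m,
          (∑ x, (Real.sqrt (∑ y', p x y') * f0 x l) * (Real.sqrt (∑ y', p x y') * f0 x m))
          * (∑ y, (Real.sqrt (∑ x', p x' y) * g0 y l) * (Real.sqrt (∑ x', p x' y) * g0 y m)))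
        = ∑ l, σ (c l) ^ 2 := by
      refine Finset.sum_congr rfl fun l _ => ?_
      have h1 : ∀ m, (∑ x, (Real.sqrt (∑ y', p x y') * f0 x l) * (Real.sqrt (∑ y', p x y') * f0 x m))
            * (∑ y, (Real.sqrt (∑ x', p x' y) * g0 y l) * (Real.sqrt (∑ x', p x' y) * g0 y m))
          = if l = m then σ (c l) ^ 2 else 0 := by
        intro m
        rw [haa l m, hbb l m]
        by_cases hlm : l = m
        · subst hlm
          rw [if_pos rfl, if_pos rfl]
          rw [mul_one, sq]
          linear_combination (Real.sqrt (σ (c l)) * Real.sqrt (σ (c l)) + σ (c l)) * hsq l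
        · rw [if_neg hlm, mul_zero, zero_mul, if_neg hlm]
      rw [Finset.sum_congr rfl fun m _ => h1 m, Finset.sum_ite_eq univ l _]
      simp only [mem_univ, if_true]
    have hmapsum : (∑ l, σ (c l) ^ 2)
        = ∑ i ∈ univ.filter (fun i : Fin N => (i : ℕ) < k), σ i ^ 2 := by
      rw [filter_lt_eq_map hkN, Finset.sum_map]
      rfl
    have hval : (∑ x, ∑ y, p x y * (∑ i, f0 x i * g0 y i))
          - (1 / 2 : ℝ) * ((Matrix.of fun i j => ∑ x, (∑ y, p x y) * (f0 x i * f0 x j)) *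
              (Matrix.of fun i j => ∑ y, (∑ x, p x y) * (g0 y i * g0 y j))).trace
        = (1 / 2 : ℝ) * ∑ i ∈ univ.filter (fun i : Fin N => (i : ℕ) < k), σ i ^ 2 := by
      rw [hconv f0 g0 hzf hzg, hEval, hTval, hmapsum]
      ring
    apply IsGreatest.csSup_eq
    constructor
    · exact ⟨f0, g0, hzf, hzg, hval.symm⟩
    · rintro r ⟨f, g, hf, hg, rfl⟩
      rw [hconv f g hf hg]
      have hki := key_ineq σ hσ0 hσmono u v hON_u hON_v
        (fun l x => Real.sqrt (∑ y', p x y') * f x l)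
        (fun l y => Real.sqrt (∑ x', p x' y) * g y l)
      linarith [hki]
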